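/- Let (Y, ρ) be a metric space with a Radon Borel probability measure μ, and let 𝒜 be an algebra of bounded continuous real-valued functions on Y that separates points and contains the constant functions. Then 𝒜 is dense in L^p(μ) for every p ∈ [1, ∞). -/

import Mathlib

open MeasureTheory
open Set
open scoped ENNReal NNReal

private lemma poly_apply_mem {Y : Type*} [TopologicalSpace Y]
    (𝒜 : Subalgebra ℝ (BoundedContinuousFunction Y ℝ))
    {h : BoundedContinuousFunction Y ℝ} (hh : h ∈ 𝒜) (P : Polynomial ℝ) :
    ∃ g ∈ 𝒜, ∀ y, g y = P.eval (h y) := by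
  induction P using Polynomial.induction_on' with
  | add p q hp hq =>
    obtain ⟨g1, hg1, e1⟩ := hp
    obtain ⟨g2, hg2, e2⟩ := hq
    exact ⟨g1 + g2, add_mem hg1 hg2, fun y => by simp [e1 y, e2 y]⟩
  | monomial n a =>
    refine ⟨a • h ^ n, Subalgebra.smul_mem 𝒜 (pow_mem hh n) a, fun y => ?_⟩
    simp [Polynomial.eval_monomial]

/-- Let `(Y, ρ)` be a metric space with a Radon Borel probability measure
`μ` (inner regular with respect to compact sets), and let `𝒜` be an algebra of bounded
continuous real-valued functions on `Y` that separates points and contains the constant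
functions.  Then `𝒜` is dense in `L^p(μ)` for every `p ∈ [1, ∞)`. -/
theorem algebra_separating_dense_Lp
    {Y : Type*} [MetricSpace Y] [MeasurableSpace Y] [BorelSpace Y]
    (μ : Measure Y) [IsProbabilityMeasure μ]
    (hRadon : ∀ ε : ℝ≥0∞, ε ≠ 0 → ∃ K : Set Y, IsCompact K ∧ μ Kᶜ < ε)
    (𝒜 : Subalgebra ℝ (BoundedContinuousFunction Y ℝ))
    (hsep : ∀ x y : Y, x ≠ y → ∃ h ∈ 𝒜, h x ≠ h y)
    (p : ℝ≥0∞) (hp : 1 ≤ p) (hp' : p ≠ ∞)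
    (f : Y → ℝ) (hf : MemLp f p μ) (ε : ℝ≥0∞) (hε : ε ≠ 0) :
    ∃ g ∈ 𝒜, eLpNorm (f - ⇑g) p μ < ε := by
  classical
  obtain ⟨δ, hδ0, hδε⟩ := exists_between (lt_of_le_of_ne (zero_le : (0:ℝ≥0∞) ≤ ε) (Ne.symm hε))
  have hδ2 : δ / 2 ≠ 0 := by
    simp [ENNReal.div_eq_zero_iff, hδ0.ne']
  -- Step 1: approximate f by a bounded continuous function
  obtain ⟨g₀, hfg₀, -⟩ := hf.exists_boundedContinuous_eLpNorm_sub_le hp' hδ2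
  -- constants
  set M : ℝ := ‖g₀‖ with hMdef
  have hM0 : 0 ≤ M := norm_nonneg _
  have hg₀b : ∀ y, |g₀ y| ≤ M := fun y => g₀.norm_coe_le_norm y
  set B : ℝ := M + 1 with hBdef
  have hB0 : (0:ℝ) < B := by positivity
  set C : ℝ := M + B + 1 with hCdef
  have hC0 : (0:ℝ) < C := by positivity
  -- choose a real target r
  obtain ⟨r, hr0, hr1, hrδ⟩ : ∃ r : ℝ, 0 < r ∧ r ≤ 1 ∧ ENNReal.ofReal r ≤ δ / 2 := by
    rcases le_or_gt 1 (δ / 2) with h | h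
    · exact ⟨1, one_pos, le_refl 1, by simpa using h⟩
    · have hfin : δ / 2 ≠ ⊤ := (h.trans_le le_top).ne
      refine ⟨(δ / 2).toReal, ENNReal.toReal_pos hδ2 hfin, ?_, ?_⟩
      · have := ENNReal.toReal_mono ENNReal.one_ne_top h.le
        simpa using this
      · rw [ENNReal.ofReal_toReal hfin]
  have hpt : 0 < p.toReal := ENNReal.toReal_pos (lt_of_lt_of_le zero_lt_one hp).ne' hp'
  -- choose compact K
  set c : ℝ := r / (2 * (C + 1)) with hcdef
  have hc0 : 0 < c := by positivity
  set θ : ℝ≥0∞ := ENNReal.ofReal (c ^ p.toReal) with hθdef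
  have hθ0 : θ ≠ 0 := ne_of_gt (ENNReal.ofReal_pos.2 (Real.rpow_pos_of_pos hc0 _))
  obtain ⟨K, hK, hμK⟩ := hRadon θ hθ0
  haveI : CompactSpace K := isCompact_iff_compactSpace.mp hK
  -- restriction algebra homomorphism and Stone--Weierstrass on K
  let Φ : BoundedContinuousFunction Y ℝ →ₐ[ℝ] C(K, ℝ) :=
    { toFun := fun f => (f.toContinuousMap).restrict K
      map_one' := rfl
      map_mul' := fun _ _ => rfl
      map_zero' := rfl
      map_add' := fun _ _ => rfl
      commutes' := fun _ => rfl }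
  have hA'sep : (𝒜.map Φ).SeparatesPoints := by
    rintro ⟨x, hx⟩ ⟨y, hy⟩ hxy
    obtain ⟨h, hh, hne⟩ := hsep x y (fun e => hxy (Subtype.ext e))
    exact ⟨_, ⟨Φ h, Subalgebra.mem_map.mpr ⟨h, hh, rfl⟩, rfl⟩, hne⟩
  obtain ⟨⟨gK, hgKmem⟩, hgKnear⟩ :=
    ContinuousMap.exists_mem_subalgebra_near_continuous_of_separatesPoints (𝒜.map Φ) hA'sep
      (fun k : K => g₀ k) (g₀.continuous.comp continuous_subtype_val) (r / 4) (by positivity)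
  obtain ⟨h, hh𝒜, rfl⟩ := Subalgebra.mem_map.mp hgKmem
  have hhK : ∀ y ∈ K, |h y - g₀ y| < r / 4 := by
    intro y hy
    exact (hgKnear ⟨y, hy⟩ : |h y - g₀ y| < r / 4)
  -- Weierstrass approximation of the clamping function
  set R : ℝ := max ‖h‖ B with hRdef
  have hRB : B ≤ R := le_max_right _ _
  set φ : ℝ → ℝ := fun x => max (-B) (min B x) with hφdef
  have hφcont : ContinuousOn φ (Icc (-R) R) :=
    (continuous_const.max (continuous_const.min continuous_id)).continuousOn
  obtain ⟨P, hP⟩ := exists_polynomial_near_of_continuousOn (-R) R φ hφcont (r / 4) (by positivity)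
  obtain ⟨g, hg𝒜, hgeval⟩ := poly_apply_mem 𝒜 hh𝒜 P
  have hhR : ∀ y, h y ∈ Icc (-R) R := by
    intro y
    have : |h y| ≤ ‖h‖ := h.norm_coe_le_norm y
    have := abs_le.mp (this.trans (le_max_left _ B))
    exact ⟨this.1, this.2⟩
  have hφbd : ∀ x, |φ x| ≤ B := by
    intro x
    rw [abs_le]
    exact ⟨le_max_left _ _, max_le (by linarith) (min_le_left _ _)⟩
  -- global bound
  have hgbd : ∀ y, |g₀ y - g y| ≤ C := by
    intro y
    rw [hgeval y, abs_sub_comm]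
    have h1 : |P.eval (h y) - φ (h y)| < r / 4 := hP _ (hhR y)
    calc |P.eval (h y) - g₀ y|
        ≤ |P.eval (h y) - φ (h y)| + |φ (h y)| + |g₀ y| := by
          have t1 : P.eval (h y) - g₀ y = (P.eval (h y) - φ (h y)) + (φ (h y) - g₀ y) := by ring
          have t2 : |φ (h y) - g₀ y| ≤ |φ (h y)| + |g₀ y| := by
            have := abs_add_le (φ (h y)) (-(g₀ y))
            simpa [sub_eq_add_neg] using this
          rw [t1]
          linarith [abs_add_le (P.eval (h y) - φ (h y)) (φ (h y) - g₀ y)]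
      _ ≤ r / 4 + B + M := by
          have := hφbd (h y); have := hg₀b y; linarith
      _ ≤ C := by rw [hCdef]; linarith
  -- bound on K
  have hgKbd : ∀ y ∈ K, |g₀ y - g y| ≤ r / 2 := by
    intro y hy
    have h1 : |h y - g₀ y| < r / 4 := hhK y hy
    have h2 : |h y| ≤ B := by
      have := hg₀b y
      have := abs_sub_abs_le_abs_sub (h y) (g₀ y)
      rw [hBdef]; linarith [abs_le.mp h1.le, abs_nonneg (h y - g₀ y)]
    have hφeq : φ (h y) = h y := by
      rw [hφdef]
      simp only
      rw [min_eq_right (abs_le.mp h2).2, max_eq_right (abs_le.mp h2).1]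
    have h3 : |P.eval (h y) - φ (h y)| < r / 4 := hP _ (hhR y)
    rw [hφeq] at h3
    rw [hgeval y, abs_sub_comm]
    calc |P.eval (h y) - g₀ y| ≤ |P.eval (h y) - h y| + |h y - g₀ y| := abs_sub_le _ _ _
      _ ≤ r / 4 + r / 4 := by linarith
      _ = r / 2 := by ring
  -- now the L^p estimate
  have hKm : MeasurableSet K := hK.isClosed.measurableSet
  have hecont : Continuous (⇑g₀ - ⇑g) := g₀.continuous.sub g.continuous
  have msm1 : AEStronglyMeasurable (K.indicator (⇑g₀ - ⇑g)) μ :=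
    (hecont.stronglyMeasurable.indicator hKm).aestronglyMeasurable
  have msm2 : AEStronglyMeasurable (Kᶜ.indicator (⇑g₀ - ⇑g)) μ :=
    (hecont.stronglyMeasurable.indicator hKm.compl).aestronglyMeasurable
  have h1 : eLpNorm (K.indicator (⇑g₀ - ⇑g)) p μ ≤ ENNReal.ofReal (r / 2) := by
    have hb : ∀ᵐ x ∂μ, ‖K.indicator (⇑g₀ - ⇑g) x‖ ≤ r / 2 := by
      refine Filter.Eventually.of_forall fun x => ?_
      by_cases hx : x ∈ K
      · rw [Set.indicator_of_mem hx]
        simpa [Real.norm_eq_abs] using hgKbd x hx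
      · rw [Set.indicator_of_notMem hx]
        simp
        positivity
    have := eLpNorm_le_of_ae_bound (p := p) (μ := μ) hb
    simpa [measure_univ] using this
  have h2 : eLpNorm (Kᶜ.indicator (⇑g₀ - ⇑g)) p μ ≤ ENNReal.ofReal (r / 2) := by
    have step1 : eLpNorm (Kᶜ.indicator (⇑g₀ - ⇑g)) p μ ≤
        eLpNorm (Kᶜ.indicator (fun _ => C)) p μ := by
      refine eLpNorm_mono fun x => ?_
      by_cases hx : x ∈ Kᶜ
      · rw [Set.indicator_of_mem hx, Set.indicator_of_mem hx]
        simp only [Real.norm_eq_abs, Pi.sub_apply]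
        rw [abs_of_pos hC0]
        exact hgbd x
      · rw [Set.indicator_of_notMem hx, Set.indicator_of_notMem hx]
    have step2 : eLpNorm (Kᶜ.indicator (fun _ => C)) p μ ≤
        ‖C‖₊ * μ Kᶜ ^ (1 / p.toReal) := eLpNorm_indicator_const_le _ _
    have hnn : (‖C‖₊ : ℝ≥0∞) = ENNReal.ofReal C := (Real.enorm_eq_ofReal hC0.le)
    have hθpow : θ ^ (1 / p.toReal) = ENNReal.ofReal c := by
      rw [hθdef, ENNReal.ofReal_rpow_of_pos (Real.rpow_pos_of_pos hc0 _), one_div,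
        Real.rpow_rpow_inv hc0.le hpt.ne']
    have step3 : (‖C‖₊ : ℝ≥0∞) * μ Kᶜ ^ (1 / p.toReal) ≤ ENNReal.ofReal C * θ ^ (1 / p.toReal) := by
      rw [hnn]
      exact mul_le_mul_right (ENNReal.rpow_le_rpow hμK.le (by positivity)) _
    have step4 : ENNReal.ofReal C * θ ^ (1 / p.toReal) ≤ ENNReal.ofReal (r / 2) := by
      rw [hθpow, ← ENNReal.ofReal_mul hC0.le]
      apply ENNReal.ofReal_le_ofReal
      rw [hcdef, mul_div_assoc']
      rw [div_le_div_iff₀ (by positivity) two_pos]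
      nlinarith
    exact step1.trans (step2.trans (step3.trans step4))
  have hstep2 : eLpNorm (⇑g₀ - ⇑g) p μ ≤ δ / 2 := by
    have hsplit : (⇑g₀ - ⇑g) = K.indicator (⇑g₀ - ⇑g) + Kᶜ.indicator (⇑g₀ - ⇑g) :=
      (Set.indicator_self_add_compl K _).symm
    calc eLpNorm (⇑g₀ - ⇑g) p μ
        = eLpNorm (K.indicator (⇑g₀ - ⇑g) + Kᶜ.indicator (⇑g₀ - ⇑g)) p μ := by rw [← hsplit]
      _ ≤ eLpNorm (K.indicator (⇑g₀ - ⇑g)) p μ + eLpNorm (Kᶜ.indicator (⇑g₀ - ⇑g)) p μ :=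
          eLpNorm_add_le msm1 msm2 hp
      _ ≤ ENNReal.ofReal (r / 2) + ENNReal.ofReal (r / 2) := add_le_add h1 h2
      _ = ENNReal.ofReal r := by
          rw [← ENNReal.ofReal_add (by positivity) (by positivity)]
          norm_num
      _ ≤ δ / 2 := hrδ
  refine ⟨g, hg𝒜, ?_⟩
  have hsplit : f - ⇑g = (f - ⇑g₀) + (⇑g₀ - ⇑g) := by
    funext x; simp
  calc eLpNorm (f - ⇑g) p μ
      = eLpNorm ((f - ⇑g₀) + (⇑g₀ - ⇑g)) p μ := by rw [← hsplit]
    _ ≤ eLpNorm (f - ⇑g₀) p μ + eLpNorm (⇑g₀ - ⇑g) p μ :=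
        eLpNorm_add_le (hf.1.sub g₀.continuous.aestronglyMeasurable) hecont.aestronglyMeasurable hp
    _ ≤ δ / 2 + δ / 2 := add_le_add hfg₀ hstep2
    _ = δ := ENNReal.add_halves δ
    _ < ε := hδε
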